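/- Let T ∈ ℕ, and for each t = 1,…,T let X_t ∈ ℝ^{n_t×d} and y_t ∈ ℝ^{n_t}. Let Λ_1,…,Λ_T ∈ ℝ^{d×d} be symmetric matrices with 0 ≺ Λ_1 ⪯ ⋯ ⪯ Λ_T, and let θ_t = A_t^{-1} b_{t-1} be the MultiVAW iterates. Set ȳ = max_{t∈[T]} ‖y_t‖₂. Then for every θ ∈ ℝ^d, R_T(θ) ≤ θᵀΛ_Tθ + ȳ² · Σ_{t=1}^T tr( X_t A_t^{-1} X_tᵀ ). -/

import Mathlib

open Matrix Finset

noncomputable section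

namespace MultiVAWProof

variable {k m : Type*} [Fintype k] [Fintype m]

lemma conjT_eq_transpose (M : Matrix m k ℝ) : Mᴴ = Mᵀ := by
  ext i j; simp [Matrix.conjTranspose_apply]

lemma psd_nonneg {M : Matrix k k ℝ} (hM : M.PosSemidef) (x : k → ℝ) :
    0 ≤ x ⬝ᵥ M *ᵥ x := by simpa using hM.dotProduct_mulVec_nonneg x

lemma transpose_eq_self {M : Matrix k k ℝ} (hM : M.IsHermitian) : Mᵀ = M := by
  rw [← conjT_eq_transpose]; exact hM

lemma dot_mulVec_symm {M : Matrix k k ℝ} (hM : M.IsHermitian) (u v : k → ℝ) :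
    u ⬝ᵥ M *ᵥ v = v ⬝ᵥ M *ᵥ u := by
  rw [Matrix.dotProduct_mulVec, ← Matrix.mulVec_transpose, transpose_eq_self hM]
  exact dotProduct_comm _ _

lemma dot_transpose_mulVec (X : Matrix m k ℝ) (θv : k → ℝ) (w : m → ℝ) :
    θv ⬝ᵥ Xᵀ *ᵥ w = (X *ᵥ θv) ⬝ᵥ w := by
  rw [Matrix.dotProduct_mulVec, Matrix.vecMul_transpose]

lemma dot_self_eq (v : m → ℝ) : v ⬝ᵥ v = ∑ i, v i ^ 2 := by
  simp [dotProduct, pow_two]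

lemma sq_expand (u w : m → ℝ) :
    ∑ i, (u - w) i ^ 2 = u ⬝ᵥ u - 2 * (w ⬝ᵥ u) + w ⬝ᵥ w := by
  simp only [dotProduct, Finset.mul_sum, ← Finset.sum_sub_distrib,
    ← Finset.sum_add_distrib]
  exact Finset.sum_congr rfl fun i _ => by simp only [Pi.sub_apply]; ring

lemma dot_XtX (Xm : Matrix m k ℝ) (v : k → ℝ) :
    v ⬝ᵥ (Xmᵀ * Xm) *ᵥ v = (Xm *ᵥ v) ⬝ᵥ (Xm *ᵥ v) := by
  rw [← Matrix.mulVec_mulVec, dot_transpose_mulVec]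

lemma dot_sandwich (Xm : Matrix m k ℝ) (N : Matrix k k ℝ) (v : m → ℝ) :
    v ⬝ᵥ (Xm * N * Xmᵀ) *ᵥ v = (Xmᵀ *ᵥ v) ⬝ᵥ N *ᵥ (Xmᵀ *ᵥ v) := by
  rw [← Matrix.mulVec_mulVec, ← Matrix.mulVec_mulVec, Matrix.dotProduct_mulVec,
    ← Matrix.mulVec_transpose]

lemma dotProduct_finset_sum {ι : Type*} (s : Finset ι) (v : m → ℝ) (f : ι → m → ℝ) :
    v ⬝ᵥ (∑ i ∈ s, f i) = ∑ i ∈ s, v ⬝ᵥ f i := by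
  classical
  induction s using Finset.induction_on with
  | empty => simp
  | @insert a s ha ih =>
    rw [Finset.sum_insert ha, Finset.sum_insert ha, dotProduct_add, ih]

lemma finset_sum_dotProduct {ι : Type*} (s : Finset ι) (v : m → ℝ) (f : ι → m → ℝ) :
    (∑ i ∈ s, f i) ⬝ᵥ v = ∑ i ∈ s, f i ⬝ᵥ v := by
  classical
  induction s using Finset.induction_on with
  | empty => simp
  | @insert a s ha ih =>
    rw [Finset.sum_insert ha, Finset.sum_insert ha, add_dotProduct, ih]

lemma XtX_psd [DecidableEq k] (Xm : Matrix m k ℝ) : (Xmᵀ * Xm).PosSemidef := by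
  rw [← conjT_eq_transpose]
  exact Matrix.posSemidef_conjTranspose_mul_self Xm

lemma psd_sum {ι : Type*} (s : Finset ι) (M : ι → Matrix k k ℝ)
    (h : ∀ i ∈ s, (M i).PosSemidef) : (∑ i ∈ s, M i).PosSemidef :=
  Finset.sum_induction M Matrix.PosSemidef (fun _ _ ha hb => ha.add hb)
    Matrix.PosSemidef.zero h

section DecEq
variable [DecidableEq k]

lemma mulVec_inv_cancel {A : Matrix k k ℝ} (hA : A.PosDef) (bv : k → ℝ) :
    A *ᵥ (A⁻¹ *ᵥ bv) = bv := by
  rw [Matrix.mulVec_mulVec, Matrix.mul_nonsing_inv _ hA.det_pos.ne'.isUnit,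
    Matrix.one_mulVec]

lemma quad_key {A : Matrix k k ℝ} (hA : A.PosDef) (bv θv : k → ℝ) :
    θv ⬝ᵥ A *ᵥ θv - 2 * (bv ⬝ᵥ θv) + bv ⬝ᵥ A⁻¹ *ᵥ bv
      = (θv - A⁻¹ *ᵥ bv) ⬝ᵥ A *ᵥ (θv - A⁻¹ *ᵥ bv) := by
  have h1 : A *ᵥ (A⁻¹ *ᵥ bv) = bv := mulVec_inv_cancel hA bv
  have h2 : θv ⬝ᵥ A *ᵥ (A⁻¹ *ᵥ bv) = bv ⬝ᵥ θv := by
    rw [h1]; exact dotProduct_comm _ _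
  have h3 : (A⁻¹ *ᵥ bv) ⬝ᵥ A *ᵥ θv = bv ⬝ᵥ θv := by
    rw [dot_mulVec_symm hA.isHermitian, h2]
  have h4 : (A⁻¹ *ᵥ bv) ⬝ᵥ A *ᵥ (A⁻¹ *ᵥ bv) = bv ⬝ᵥ A⁻¹ *ᵥ bv := by
    rw [h1]; exact dotProduct_comm _ _
  rw [Matrix.mulVec_sub, dotProduct_sub, sub_dotProduct,
    sub_dotProduct, h2, h3, h4]
  ring

lemma quad_lower {A : Matrix k k ℝ} (hA : A.PosDef) (bv θv : k → ℝ) :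
    -(bv ⬝ᵥ A⁻¹ *ᵥ bv) ≤ θv ⬝ᵥ A *ᵥ θv - 2 * (bv ⬝ᵥ θv) := by
  have h := psd_nonneg hA.posSemidef (θv - A⁻¹ *ᵥ bv)
  rw [← quad_key hA bv θv] at h
  linarith

lemma quad_min {A : Matrix k k ℝ} (hA : A.PosDef) (bv : k → ℝ) :
    (A⁻¹ *ᵥ bv) ⬝ᵥ A *ᵥ (A⁻¹ *ᵥ bv) - 2 * (bv ⬝ᵥ (A⁻¹ *ᵥ bv))
      = -(bv ⬝ᵥ A⁻¹ *ᵥ bv) := by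
  rw [mulVec_inv_cancel hA bv, dotProduct_comm]
  ring

end DecEq

section SqrtPort
open scoped MatrixOrder

/-- Port helper: square root of a PSD real matrix (via `CFC.sqrt`). -/
def _root_.Matrix.PosSemidef.sqrt [DecidableEq k] {M : Matrix k k ℝ} (_hM : M.PosSemidef) :
    Matrix k k ℝ := CFC.sqrt M

lemma _root_.Matrix.PosSemidef.sqrt_mul_self [DecidableEq k] {M : Matrix k k ℝ}
    (hM : M.PosSemidef) : hM.sqrt * hM.sqrt = M :=
  CFC.sqrt_mul_sqrt_self M hM.nonneg

lemma _root_.Matrix.PosSemidef.posSemidef_sqrt [DecidableEq k] {M : Matrix k k ℝ}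
    (hM : M.PosSemidef) : hM.sqrt.PosSemidef :=
  (CFC.sqrt_nonneg M).posSemidef

end SqrtPort

lemma trace_eq_sum_sq [DecidableEq k] {M : Matrix k k ℝ} (hM : M.PosSemidef) :
    M.trace = ∑ i, ∑ j, hM.sqrt i j ^ 2 := by
  have hs : hM.sqrt * hM.sqrt = M := hM.sqrt_mul_self
  have hsym : (hM.sqrt)ᵀ = hM.sqrt := transpose_eq_self hM.posSemidef_sqrt.isHermitian
  have hji : ∀ i j, hM.sqrt j i = hM.sqrt i j := fun i j =>
    (Matrix.transpose_apply hM.sqrt i j).symm.trans (congrFun (congrFun hsym i) j)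
  calc M.trace = (hM.sqrt * hM.sqrt).trace := by rw [hs]
    _ = ∑ i, ∑ j, hM.sqrt i j * hM.sqrt j i := by
        simp [Matrix.trace, Matrix.diag, Matrix.mul_apply]
    _ = ∑ i, ∑ j, hM.sqrt i j ^ 2 := by
        refine Finset.sum_congr rfl fun i _ => Finset.sum_congr rfl fun j _ => ?_
        rw [hji i j]; ring

lemma trace_nonneg_of_psd [DecidableEq k] {M : Matrix k k ℝ} (hM : M.PosSemidef) :
    0 ≤ M.trace := by
  rw [trace_eq_sum_sq hM]
  exact Finset.sum_nonneg fun i _ => Finset.sum_nonneg fun j _ => sq_nonneg _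

lemma dot_le_trace [DecidableEq k] {M : Matrix k k ℝ} (hM : M.PosSemidef) (v : k → ℝ) :
    v ⬝ᵥ M *ᵥ v ≤ M.trace * ∑ i, v i ^ 2 := by
  have hs : hM.sqrt * hM.sqrt = M := hM.sqrt_mul_self
  have hsym : (hM.sqrt)ᵀ = hM.sqrt := transpose_eq_self hM.posSemidef_sqrt.isHermitian
  have h1 : v ⬝ᵥ M *ᵥ v = (hM.sqrt *ᵥ v) ⬝ᵥ (hM.sqrt *ᵥ v) := by
    have hc := congrArg (fun Z : Matrix k k ℝ => v ⬝ᵥ Z *ᵥ v) hs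
    change v ⬝ᵥ (hM.sqrt * hM.sqrt) *ᵥ v = v ⬝ᵥ M *ᵥ v at hc
    rw [← hc, ← Matrix.mulVec_mulVec, Matrix.dotProduct_mulVec, ← Matrix.mulVec_transpose,
      hsym]
  have h2 : (hM.sqrt *ᵥ v) ⬝ᵥ (hM.sqrt *ᵥ v) = ∑ i, (∑ j, hM.sqrt i j * v j) ^ 2 := by
    simp only [dotProduct, Matrix.mulVec]
    exact Finset.sum_congr rfl fun i _ => (pow_two _).symm
  rw [h1, h2, trace_eq_sum_sq hM, Finset.sum_mul]
  refine Finset.sum_le_sum fun i _ => ?_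
  exact Finset.sum_mul_sq_le_sq_mul_sq Finset.univ _ _

end MultiVAWProof

open MultiVAWProof

/-- **Intermediate regret bound for MultiVAW.**  With symmetric regularizers
`0 ≺ Λ_1 ⪯ ⋯ ⪯ Λ_T`, `A_t = Λ_t + ∑_{s≤t} XₛᵀXₛ`, `b_t = ∑_{s≤t} Xₛᵀyₛ`,
iterates `θ_t = A_t⁻¹ b_{t-1}`, and `ȳ = max_{t∈[T]} ‖y t‖₂`, the regret
against any competitor `θc` is at most
`θcᵀ Λ_T θc + ȳ² ∑_{t=1}^T tr(X_t A_t⁻¹ X_tᵀ)`. -/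
theorem multivaw_regret_trace_bound
    (T d : ℕ) (hT : 1 ≤ T)
    (n : ℕ → ℕ)
    (X : (t : ℕ) → Matrix (Fin (n t)) (Fin d) ℝ)
    (y : (t : ℕ) → Fin (n t) → ℝ)
    (Λ : ℕ → Matrix (Fin d) (Fin d) ℝ)
    (hΛsymm : ∀ t ∈ Icc 1 T, (Λ t).IsHermitian)
    (hΛ1pos : (Λ 1).PosDef)
    (hΛmono : ∀ t, 1 ≤ t → t + 1 ≤ T → (Λ (t + 1) - Λ t).PosSemidef)
    (A : ℕ → Matrix (Fin d) (Fin d) ℝ)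
    (hA : ∀ t ∈ Icc 1 T, A t = Λ t + ∑ s ∈ Icc 1 t, (X s)ᵀ * X s)
    (b : ℕ → (Fin d → ℝ))
    (hb : ∀ t ≤ T, b t = ∑ s ∈ Icc 1 t, (X s)ᵀ.mulVec (y s))
    (θ : ℕ → (Fin d → ℝ))
    (hθ : ∀ t ∈ Icc 1 T, θ t = (A t)⁻¹.mulVec (b (t - 1)))
    (ybar : ℝ)
    (hybar : ybar = (Icc 1 T).sup' (Finset.nonempty_Icc.mpr hT)
      (fun t => Real.sqrt (∑ i, (y t i) ^ 2)))
    (θc : Fin d → ℝ) :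
    (∑ t ∈ Icc 1 T, ∑ i, ((X t).mulVec (θ t) - y t) i ^ 2)
      - ∑ t ∈ Icc 1 T, ∑ i, ((X t).mulVec θc - y t) i ^ 2
    ≤ θc ⬝ᵥ (Λ T).mulVec θc
        + ybar ^ 2 * ∑ t ∈ Icc 1 T, ((X t) * (A t)⁻¹ * (X t)ᵀ).trace := by
  classical
  -- Λ is positive definite on [1,T]
  have hΛpos : ∀ t, 1 ≤ t → t ≤ T → (Λ t).PosDef := by
    intro t ht
    induction t, ht using Nat.le_induction with
    | base => intro _; exact hΛ1pos
    | succ t ht ih =>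
      intro hle
      have h1 : t ≤ T := le_trans (Nat.le_succ t) hle
      have h2 := (ih h1).add_posSemidef (hΛmono t ht hle)
      have e : Λ t + (Λ (t + 1) - Λ t) = Λ (t + 1) := by abel
      rwa [e] at h2
  -- A is positive definite on [1,T]
  have hApos : ∀ t, 1 ≤ t → t ≤ T → (A t).PosDef := by
    intro t h1 h2
    rw [hA t (mem_Icc.mpr ⟨h1, h2⟩)]
    exact (hΛpos t h1 h2).add_posSemidef (psd_sum _ _ fun s _ => XtX_psd (X s))
  -- potential function
  set mf : ℕ → ℝ := fun t => if t = 0 then 0 else -(b t ⬝ᵥ (A t)⁻¹ *ᵥ (b t)) with hmf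
  have hmf0 : mf 0 = 0 := by simp [hmf]
  have hmfpos : ∀ t, 1 ≤ t → mf t = -(b t ⬝ᵥ (A t)⁻¹ *ᵥ (b t)) := by
    intro t ht
    simp only [hmf]
    rw [if_neg (by omega : ¬ t = 0)]
  have hb0 : b 0 = 0 := by rw [hb 0 (Nat.zero_le T)]; simp
  have hbstep : ∀ u, u + 1 ≤ T → b (u + 1) = b u + (X (u + 1))ᵀ *ᵥ y (u + 1) := by
    intro u h2
    rw [hb (u + 1) h2, hb u (by omega), Finset.sum_Icc_succ_top (by omega : 1 ≤ u + 1)]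
  have hAstep : ∀ u, 1 ≤ u → u + 1 ≤ T →
      A (u + 1) = A u + (Λ (u + 1) - Λ u) + (X (u + 1))ᵀ * X (u + 1) := by
    intro u h1 h2
    rw [hA (u + 1) (mem_Icc.mpr ⟨by omega, h2⟩), hA u (mem_Icc.mpr ⟨h1, by omega⟩),
      Finset.sum_Icc_succ_top (by omega : 1 ≤ u + 1)]
    abel
  -- per-step inequality
  have key : ∀ t ∈ Icc 1 T,
      (∑ i, ((X t) *ᵥ θ t - y t) i ^ 2)
        ≤ mf t - mf (t - 1) + y t ⬝ᵥ ((X t) * (A t)⁻¹ * (X t)ᵀ) *ᵥ y t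
          + ∑ i, (y t i) ^ 2 := by
    intro t ht
    rw [mem_Icc] at ht
    obtain ⟨h1, h2⟩ := ht
    have hAt := hApos t h1 h2
    have hθt : θ t = (A t)⁻¹ *ᵥ b (t - 1) := hθ t (mem_Icc.mpr ⟨h1, h2⟩)
    -- min value of shifted quadratic
    have hmin : θ t ⬝ᵥ (A t) *ᵥ θ t - 2 * (b (t - 1) ⬝ᵥ θ t)
        = -(b (t - 1) ⬝ᵥ (A t)⁻¹ *ᵥ b (t - 1)) := by
      rw [hθt]; exact quad_min hAt _
    -- lower bound on shifted quadratic
    have hlow : mf (t - 1) + ((X t) *ᵥ θ t) ⬝ᵥ ((X t) *ᵥ θ t)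
        ≤ θ t ⬝ᵥ (A t) *ᵥ θ t - 2 * (b (t - 1) ⬝ᵥ θ t) := by
      rcases Nat.lt_or_ge t 2 with hc | hc
      · -- t = 1
        have ht1 : t = 1 := by omega
        subst ht1
        simp only [Nat.sub_self, hmf0, hb0, zero_dotProduct, mul_zero, sub_zero,
          zero_add]
        rw [hA 1 (mem_Icc.mpr ⟨le_rfl, h2⟩), Matrix.add_mulVec, dotProduct_add]
        have e1 : θ 1 ⬝ᵥ (∑ s ∈ Icc 1 1, (X s)ᵀ * X s) *ᵥ θ 1
            = ((X 1) *ᵥ θ 1) ⬝ᵥ ((X 1) *ᵥ θ 1) := by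
          rw [show (Icc 1 1 : Finset ℕ) = {1} from rfl, Finset.sum_singleton, dot_XtX]
        rw [e1]
        have e2 : 0 ≤ θ 1 ⬝ᵥ (Λ 1) *ᵥ θ 1 := psd_nonneg hΛ1pos.posSemidef _
        linarith
      · -- t ≥ 2
        obtain ⟨u, rfl⟩ : ∃ u, t = u + 1 := ⟨t - 1, by omega⟩
        have hu1 : 1 ≤ u := by omega
        have hut : u ≤ T := by omega
        have htu : u + 1 - 1 = u := by omega
        rw [htu]
        have hAu := hApos u hu1 hut
        have hq := quad_lower hAu (b u) (θ (u + 1))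
        rw [← hmfpos u hu1] at hq
        have hexp : θ (u + 1) ⬝ᵥ (A (u + 1)) *ᵥ θ (u + 1)
            = θ (u + 1) ⬝ᵥ (A u) *ᵥ θ (u + 1)
              + θ (u + 1) ⬝ᵥ (Λ (u + 1) - Λ u) *ᵥ θ (u + 1)
              + ((X (u + 1)) *ᵥ θ (u + 1)) ⬝ᵥ ((X (u + 1)) *ᵥ θ (u + 1)) := by
          rw [hAstep u hu1 h2, Matrix.add_mulVec, Matrix.add_mulVec,
            dotProduct_add, dotProduct_add, dot_XtX]
        have hpsd : 0 ≤ θ (u + 1) ⬝ᵥ (Λ (u + 1) - Λ u) *ᵥ θ (u + 1) :=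
          psd_nonneg (hΛmono u hu1 h2) _
        rw [hexp]
        linarith
    -- expansion of mf t
    have hsplit : -(b (t - 1) ⬝ᵥ (A t)⁻¹ *ᵥ b (t - 1))
        = mf t + 2 * (y t ⬝ᵥ ((X t) *ᵥ θ t))
          + y t ⬝ᵥ ((X t) * (A t)⁻¹ * (X t)ᵀ) *ᵥ y t := by
      obtain ⟨u, rfl⟩ : ∃ u, t = u + 1 := ⟨t - 1, by omega⟩
      have htu : u + 1 - 1 = u := by omega
      rw [htu] at hθt ⊢
      have hbs : b (u + 1) = b u + (X (u + 1))ᵀ *ᵥ y (u + 1) := hbstep u h2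
      have hherm : ((A (u + 1))⁻¹).IsHermitian := hAt.isHermitian.inv
      set N := (A (u + 1))⁻¹ with hN
      set w := (X (u + 1))ᵀ *ᵥ y (u + 1) with hw
      have hexp2 : (b u + w) ⬝ᵥ N *ᵥ (b u + w)
          = b u ⬝ᵥ N *ᵥ b u + 2 * (w ⬝ᵥ N *ᵥ b u) + w ⬝ᵥ N *ᵥ w := by
        rw [Matrix.mulVec_add, dotProduct_add, add_dotProduct,
          add_dotProduct, dot_mulVec_symm hherm (b u) w]
        ring
      have e3 : w ⬝ᵥ N *ᵥ b u = y (u + 1) ⬝ᵥ ((X (u + 1)) *ᵥ θ (u + 1)) := by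
        rw [← hθt, hw, dotProduct_comm, dot_transpose_mulVec,
          dotProduct_comm]
      have e4 : w ⬝ᵥ N *ᵥ w
          = y (u + 1) ⬝ᵥ ((X (u + 1)) * N * (X (u + 1))ᵀ) *ᵥ y (u + 1) :=
        (dot_sandwich (X (u + 1)) N (y (u + 1))).symm
      rw [hmfpos (u + 1) (by omega), hbs, hexp2, e3, e4]
      ring
    -- loss expansion
    have hloss : ∑ i, ((X t) *ᵥ θ t - y t) i ^ 2
        = ((X t) *ᵥ θ t) ⬝ᵥ ((X t) *ᵥ θ t) - 2 * (y t ⬝ᵥ ((X t) *ᵥ θ t))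
          + ∑ i, (y t i) ^ 2 := by
      rw [sq_expand, dot_self_eq (y t)]
    rw [hloss]
    rw [hsplit] at hmin
    linarith
  -- telescoping
  have htel : ∀ S : ℕ, ∑ t ∈ Icc 1 S, (mf t - mf (t - 1)) = mf S - mf 0 := by
    intro S
    induction S with
    | zero => simp
    | succ S ih =>
      rw [Finset.sum_Icc_succ_top (Nat.succ_le_succ (Nat.zero_le _)), ih]
      simp only [Nat.add_sub_cancel]
      ring
  -- summed inequality
  have hsum : ∑ t ∈ Icc 1 T, (∑ i, ((X t) *ᵥ θ t - y t) i ^ 2)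
      ≤ mf T + ∑ t ∈ Icc 1 T, y t ⬝ᵥ ((X t) * (A t)⁻¹ * (X t)ᵀ) *ᵥ y t
        + ∑ t ∈ Icc 1 T, ∑ i, (y t i) ^ 2 := by
    have h := Finset.sum_le_sum key
    rw [Finset.sum_add_distrib, Finset.sum_add_distrib, htel T, hmf0, sub_zero] at h
    exact h
  -- comparator bound
  have hcomp : mf T ≤ θc ⬝ᵥ (Λ T) *ᵥ θc
      + ∑ t ∈ Icc 1 T, (∑ i, ((X t) *ᵥ θc - y t) i ^ 2)
      - ∑ t ∈ Icc 1 T, ∑ i, (y t i) ^ 2 := by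
    have hAT := hApos T hT le_rfl
    have h1 := quad_lower hAT (b T) θc
    rw [← hmfpos T hT] at h1
    have h2 : θc ⬝ᵥ (A T) *ᵥ θc - 2 * (b T ⬝ᵥ θc)
        = θc ⬝ᵥ (Λ T) *ᵥ θc
          + ∑ t ∈ Icc 1 T, (((X t) *ᵥ θc) ⬝ᵥ ((X t) *ᵥ θc)
              - 2 * (y t ⬝ᵥ ((X t) *ᵥ θc))) := by
      rw [hA T (mem_Icc.mpr ⟨hT, le_rfl⟩), hb T le_rfl, Matrix.add_mulVec,
        dotProduct_add]
      have e1 : θc ⬝ᵥ (∑ s ∈ Icc 1 T, (X s)ᵀ * X s) *ᵥ θc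
          = ∑ s ∈ Icc 1 T, ((X s) *ᵥ θc) ⬝ᵥ ((X s) *ᵥ θc) := by
        have hmv : (∑ s ∈ Icc 1 T, (X s)ᵀ * X s) *ᵥ θc
            = ∑ s ∈ Icc 1 T, ((X s)ᵀ * X s) *ᵥ θc := by
          induction (Icc 1 T) using Finset.induction_on with
          | empty => simp
          | insert _ _ hnm ih =>
            rw [Finset.sum_insert hnm, Finset.sum_insert hnm, Matrix.add_mulVec, ih]
        rw [hmv, dotProduct_finset_sum]
        exact Finset.sum_congr rfl fun s _ => dot_XtX (X s) θc
      have e2 : (∑ s ∈ Icc 1 T, (X s)ᵀ *ᵥ y s) ⬝ᵥ θc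
          = ∑ s ∈ Icc 1 T, (y s) ⬝ᵥ ((X s) *ᵥ θc) := by
        rw [finset_sum_dotProduct]
        exact Finset.sum_congr rfl fun s _ => by
          rw [dotProduct_comm, dot_transpose_mulVec, dotProduct_comm]
      rw [e1, e2, Finset.sum_sub_distrib, ← Finset.mul_sum]
      ring
    have h3 : ∀ t ∈ Icc 1 T,
        ((X t) *ᵥ θc) ⬝ᵥ ((X t) *ᵥ θc) - 2 * (y t ⬝ᵥ ((X t) *ᵥ θc))
          = (∑ i, ((X t) *ᵥ θc - y t) i ^ 2) - ∑ i, (y t i) ^ 2 := by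
      intro t _
      rw [sq_expand, dot_self_eq (y t)]
      ring
    rw [Finset.sum_congr rfl h3, Finset.sum_sub_distrib] at h2
    rw [h2] at h1
    linarith
  -- trace bound on each quadratic term
  have hyb : ∀ t ∈ Icc 1 T, ∑ i, (y t i) ^ 2 ≤ ybar ^ 2 := by
    intro t ht
    have h1 : Real.sqrt (∑ i, (y t i) ^ 2) ≤ ybar := by
      rw [hybar]
      exact Finset.le_sup' (fun t => Real.sqrt (∑ i, (y t i) ^ 2)) ht
    have h2 : (0:ℝ) ≤ ∑ i, (y t i) ^ 2 := Finset.sum_nonneg fun i _ => sq_nonneg _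
    calc ∑ i, (y t i) ^ 2 = (Real.sqrt (∑ i, (y t i) ^ 2)) ^ 2 := (Real.sq_sqrt h2).symm
      _ ≤ ybar ^ 2 := pow_le_pow_left₀ (Real.sqrt_nonneg _) h1 2
  have hMb : ∀ t ∈ Icc 1 T,
      y t ⬝ᵥ ((X t) * (A t)⁻¹ * (X t)ᵀ) *ᵥ y t
        ≤ ybar ^ 2 * ((X t) * (A t)⁻¹ * (X t)ᵀ).trace := by
    intro t ht
    have ht' := ht
    rw [mem_Icc] at ht'
    have hAt := hApos t ht'.1 ht'.2
    have hMt : ((X t) * (A t)⁻¹ * (X t)ᵀ).PosSemidef := by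
      rw [← conjT_eq_transpose]
      exact hAt.inv.posSemidef.mul_mul_conjTranspose_same (X t)
    calc y t ⬝ᵥ ((X t) * (A t)⁻¹ * (X t)ᵀ) *ᵥ y t
        ≤ ((X t) * (A t)⁻¹ * (X t)ᵀ).trace * ∑ i, (y t i) ^ 2 := dot_le_trace hMt (y t)
      _ ≤ ((X t) * (A t)⁻¹ * (X t)ᵀ).trace * ybar ^ 2 :=
          mul_le_mul_of_nonneg_left (hyb t ht) (trace_nonneg_of_psd hMt)
      _ = ybar ^ 2 * ((X t) * (A t)⁻¹ * (X t)ᵀ).trace := mul_comm _ _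
  have hMsum : ∑ t ∈ Icc 1 T, y t ⬝ᵥ ((X t) * (A t)⁻¹ * (X t)ᵀ) *ᵥ y t
      ≤ ybar ^ 2 * ∑ t ∈ Icc 1 T, ((X t) * (A t)⁻¹ * (X t)ᵀ).trace := by
    rw [Finset.mul_sum]
    exact Finset.sum_le_sum hMb
  linarith
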